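/- arXiv:1805.06216 — 8 statements merged into one kernel-verified Lean document; each statement's English description precedes it below -/
import Mathlib

section
/- The Drinker Paradox implies the Constant Domain principle: for any predicate P on α and proposition Q, if ∃y, (P y → ∀x, P x), then (∀x, (P x ∨ Q)) → ((∀x, P x) ∨ Q), constructively. -/
theorem dp_implies_cd (α : Type*) (P : α → Prop) (Q : Prop)
    (DP : ∃ y, (P y → ∀ x, P x)) :
    (∀ x, P x ∨ Q) → (∀ x, P x) ∨ Q := by
  intro h
  obtain ⟨y, hy⟩ := DP
  rcases h y with hp | hq
  · exact Or.inl (hy hp)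
  · exact Or.inr hq
end

section
/- The Universal Double Negation Shift is constructively equivalent to the Weak General Markov Principle: for any predicate P on α, ((∀x, ¬¬P x) → ¬¬∀x, P x) holds if and only if (¬(∀x, P x) → ¬¬∃x, ¬P x), and both directions are provable constructively (schematically, over the same predicate). -/
theorem dnsu_iff_wgmp (α : Type*) (P : α → Prop) :
    ((∀ x, ¬¬P x) → ¬¬(∀ x, P x)) ↔ (¬(∀ x, P x) → ¬¬(∃ x, ¬P x)) := by
  constructor
  · intro dnsu h hne
    exact dnsu (fun x hnp => hne ⟨x, hnp⟩) h
  · intro wgmp h hn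
    exact wgmp hn (fun ⟨x, hx⟩ => h x hx)
end

section
/- Two-termed reduction of DP to DGP with EFQ: in a type α with two elements 0 and 1 and a predicate D with D 0, ¬D 1, and ∀x, D x ∨ ¬D x, and assuming ex falso (which holds in Lean), the Drinker Paradox for the predicate Q x := (D x → A) ∧ (¬D x → B) implies (A → B) ∨ (B → A), constructively. -/
theorem dp_tt_efq_implies_dgp (α : Type*) (a₀ a₁ : α) (D : α → Prop)
    (hD0 : D a₀) (hD1 : ¬D a₁) (hDx : ∀ x, D x ∨ ¬D x) (A B : Prop)
    (DP : ∃ y, (((D y → A) ∧ (¬D y → B)) → ∀ x, (D x → A) ∧ (¬D x → B))) :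
    (A → B) ∨ (B → A) := by
  obtain ⟨y, hy⟩ := DP
  rcases hDx y with h | h
  · left
    intro a
    exact (hy ⟨fun _ => a, fun hn => absurd h hn⟩ a₁).2 hD1
  · right
    intro b
    exact (hy ⟨fun hd => absurd hd h, fun _ => b⟩ a₀).1 hD0
end

section
/- Two-termed reduction of DP to WLEM: in a type α with elements a₀, a₁ and a decidable predicate D satisfying D a₀ and ¬D a₁, the Drinker Paradox for Q x := (D x → ¬¬A) ∧ (¬D x → ¬A) implies ¬A ∨ ¬¬A, constructively (no ex falso needed). -/
theorem dp_tt_implies_wlem (α : Type*) (a₀ a₁ : α) (D : α → Prop)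
    (hD0 : D a₀) (hD1 : ¬D a₁) (hDx : ∀ x, D x ∨ ¬D x) (A : Prop)
    (DP : ∃ y, (((D y → ¬¬A) ∧ (¬D y → ¬A)) → ∀ x, (D x → ¬¬A) ∧ (¬D x → ¬A))) :
    ¬A ∨ ¬¬A := by
  obtain ⟨y, hy⟩ := DP
  rcases hDx y with hdy | hdy
  · left
    intro hA
    exact (hy ⟨fun _ hnA => hnA hA, fun h => absurd hdy h⟩ a₁).2 hD1 hA
  · right
    intro hnA
    exact (hy ⟨fun h => absurd h hdy, fun _ => hnA⟩ a₀).1 hD0 hnA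
end

section
/- Two-termed reduction of GMP to WLEM: in a type α with elements a₀, a₁ and a decidable predicate D satisfying D a₀ and ¬D a₁, the General Markov Principle for Q x := (D x → ¬¬A) ∧ (¬D x → ¬A) implies ¬A ∨ ¬¬A, constructively. -/
theorem gmp_tt_implies_wlem (α : Type*) (a₀ a₁ : α) (D : α → Prop)
    (hD0 : D a₀) (hD1 : ¬D a₁) (hDx : ∀ x, D x ∨ ¬D x) (A : Prop)
    (GMP : ¬(∀ x, (D x → ¬¬A) ∧ (¬D x → ¬A)) → ∃ x, ¬((D x → ¬¬A) ∧ (¬D x → ¬A))) :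
    ¬A ∨ ¬¬A := by
  obtain ⟨x, hx⟩ := GMP (fun h => ((h a₀).1 hD0) ((h a₁).2 hD1))
  rcases hDx x with hd | hd
  · left
    intro a
    exact hx ⟨fun _ nna => nna a, fun nd => absurd hd nd⟩
  · right
    intro na
    exact hx ⟨fun d => absurd d hd, fun _ => na⟩
end

section
/- Two-termed reduction of DNSE to WLEM: in a type α with elements a₀, a₁ and a decidable predicate D satisfying D a₀ and ¬D a₁, the Existential Double Negation Shift for Q x := (D x → ¬¬A) ∧ (¬D x → ¬A) implies ¬A ∨ ¬¬A, constructively. -/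
theorem dnse_tt_implies_wlem (α : Type*) (a₀ a₁ : α) (D : α → Prop)
    (hD0 : D a₀) (hD1 : ¬D a₁) (hDx : ∀ x, D x ∨ ¬D x) (A : Prop)
    (DNSE : ¬¬(∃ x, (D x → ¬¬A) ∧ (¬D x → ¬A)) → ∃ x, ¬¬((D x → ¬¬A) ∧ (¬D x → ¬A))) :
    ¬A ∨ ¬¬A := by
  have hnn : ¬¬(∃ x, (D x → ¬¬A) ∧ (¬D x → ¬A)) := by
    intro h
    have hnA : ¬A := fun a => h ⟨a₀, fun _ => fun k => k a, fun hd => absurd hD0 hd⟩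
    exact h ⟨a₁, fun hd => absurd hd hD1, fun _ => hnA⟩
  obtain ⟨x, hx⟩ := DNSE hnn
  rcases hDx x with hd | hd
  · exact Or.inr (fun hnA => hx (fun ⟨h1, _⟩ => h1 hd hnA))
  · exact Or.inl (fun a => hx (fun ⟨_, h2⟩ => h2 hd a))
end

section
/- In a Kripke model whose frame is a linear order in which every nonempty set of worlds has a maximum (e.g., a finite linear order), with constant domain, the Drinker Paradox is forced at every world: for every world w and every monotone predicate interpretation P (monotone in the world argument), there exists a term y such that for all worlds v ≥ w, if P v y then P v x for all terms x. -/
theorem dp_forced_in_max_linear_model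
    (W : Type*) [LinearOrder W] [Nonempty W]
    (hmax : ∀ S : Set W, S.Nonempty → ∃ m ∈ S, ∀ w ∈ S, w ≤ m)
    (T : Type*) [Finite T] [Nonempty T]
    (P : W → T → Prop)
    (hmono : ∀ {w v : W} {t : T}, w ≤ v → P w t → P v t) :
    ∀ w : W, ∃ y : T, ∀ v : W, w ≤ v → (P v y → ∀ x : T, P v x) := by
  intro w
  by_cases h : ∃ v, w ≤ v ∧ ¬ ∀ x, P v x
  · obtain ⟨m, ⟨hwm, hm⟩, hmax'⟩ := hmax {v | w ≤ v ∧ ¬ ∀ x, P v x} h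
    push_neg at hm
    obtain ⟨y, hy⟩ := hm
    refine ⟨y, fun v hwv hvy => ?_⟩
    by_contra hx
    push_neg at hx
    exact hy (hmono (hmax' v ⟨hwv, by push_neg; exact hx⟩) hvy)
  · push_neg at h
    exact ⟨Classical.arbitrary T, fun v hwv _ => h v hwv⟩
end

section
/- Countermodel separating DP from HE: in the Kripke model over worlds ℕ with the usual order, constant domain ℕ, and forcing P n t defined as t ≤ n, the Drinker Paradox fails at world 0 (there is no term y with: for all worlds v, P v y → ∀ x, P v x), while for every monotone predicate Q : ℕ → ℕ → Prop in this frame, HE is forced at world 0 (there exists y such that for all v, (∃x, Q v x) → Q v y) — in particular HE holds for P. -/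
theorem dp_fails_he_holds_countermodel :
    (¬∃ y : ℕ, ∀ v : ℕ, (y ≤ v → ∀ x : ℕ, x ≤ v)) ∧
    (∀ Q : ℕ → ℕ → Prop, (∀ m n t, m ≤ n → Q m t → Q n t) →
      ∃ y : ℕ, ∀ v : ℕ, (∃ x, Q v x) → Q v y) := by
  constructor
  · rintro ⟨y, h⟩
    exact absurd (h y le_rfl (y+1)) (by omega)
  · intro Q hmono
    classical
    by_cases h : ∃ v x, Q v x
    · obtain ⟨v0, hv0⟩ := Nat.find_spec h
      refine ⟨v0, fun v hv => ?_⟩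
      have : Nat.find h ≤ v := Nat.find_min' h hv
      exact hmono _ _ _ this hv0
    · exact ⟨0, fun v hv => absurd ⟨v, hv⟩ h⟩
end
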